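/- Let (G,γ) be a ℤ²-colored graph. Then every subgraph G' of G with at least one edge, having n' vertices, m' edges, Λ(G') of rank k', c'₀ components with trivial ρ-image and c'₁ components with nontrivial ρ-image, satisfies m' ≤ 2n' + max{2k'−1,0} − 3c'₀ − 2c'₁, if and only if every subgraph G' of G with at least one edge, having n' vertices, m' edges, Λ(G') of rank k' and c' connected components in total, satisfies m' ≤ 2(n' + k') − 3 − 2(c'−1). -/

import Mathlib

open Matrix

noncomputable section

/-- A `Γ`-colored directed multigraph: vertex set `Fin n`, edge set `Fin m`,
each edge `e` directed from `tail e` to `head e` with color `color e`. -/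
structure CGraph (Γ : Type) where
  n : ℕ
  m : ℕ
  tail : Fin m → Fin n
  head : Fin m → Fin n
  color : Fin m → Γ

namespace CGraph

variable {Γ : Type} [AddCommGroup Γ]

/-- The vertices spanned by a subset `S` of edges (the subgraph determined by `S`). -/
def verts (G : CGraph Γ) (S : Finset (Fin G.m)) : Finset (Fin G.n) :=
  S.image G.tail ∪ S.image G.head

/-- One step of a walk in the subgraph `S`, recorded together with the running gain:
an edge may be traversed forwards (adding its color) or backwards (subtracting it). -/
def liftStep (G : CGraph Γ) (S : Finset (Fin G.m)) (x y : Fin G.n × Γ) : Prop :=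
  ∃ e ∈ S,
    (G.tail e = x.1 ∧ G.head e = y.1 ∧ y.2 = x.2 + G.color e) ∨
    (G.head e = x.1 ∧ G.tail e = y.1 ∧ y.2 = x.2 - G.color e)

/-- The ρ-image of the component of `v` in the subgraph `S`: the subgroup of `Γ`
formed by the gains of closed walks in `S` based at `v`. -/
def gainGroup (G : CGraph Γ) (S : Finset (Fin G.m)) (v : Fin G.n) : AddSubgroup Γ :=
  AddSubgroup.closure {g : Γ | Relation.ReflTransGen (G.liftStep S) (v, 0) (v, g)}

/-- Adjacency (through an edge of `S`) on the vertices of the subgraph `S`. -/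
def adj (G : CGraph Γ) (S : Finset (Fin G.m))
    (x y : {v : Fin G.n // v ∈ G.verts S}) : Prop :=
  ∃ e ∈ S, (G.tail e = x.1 ∧ G.head e = y.1) ∨ (G.tail e = y.1 ∧ G.head e = x.1)

/-- The connected components of the subgraph `S`. -/
def comps (G : CGraph Γ) (S : Finset (Fin G.m)) : Type :=
  Quot (G.adj S)

/-- The component `x` of the subgraph `S` has trivial ρ-image. -/
def TrivComp (G : CGraph Γ) (S : Finset (Fin G.m)) (x : G.comps S) : Prop :=
  ∃ v, Quot.mk (G.adj S) v = x ∧ G.gainGroup S v.1 = ⊥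

/-- The number of connected components of `S` with trivial ρ-image. -/
def c0 (G : CGraph Γ) (S : Finset (Fin G.m)) : ℕ :=
  Nat.card {x : G.comps S // G.TrivComp S x}

/-- The number of connected components of `S` with nontrivial ρ-image. -/
def c1 (G : CGraph Γ) (S : Finset (Fin G.m)) : ℕ :=
  Nat.card {x : G.comps S // ¬ G.TrivComp S x}

/-- The total number of connected components of the subgraph `S`. -/
def numComps (G : CGraph Γ) (S : Finset (Fin G.m)) : ℕ :=
  Nat.card (G.comps S)

/-- `Λ(S)`: the subgroup of `Γ` generated by the ρ-images of all components of `S`. -/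
def Lambda (G : CGraph Γ) (S : Finset (Fin G.m)) : AddSubgroup Γ :=
  ⨆ v ∈ G.verts S, G.gainGroup S v

end CGraph

/-! ### Auxiliary development -/

namespace CGraph

open Finset Relation

set_option linter.unusedSectionVars false

variable {Γ : Type} [AddCommGroup Γ] (G : CGraph Γ) (S : Finset (Fin G.m))

instance : Finite (G.comps S) := Quot.finite _

lemma mem_verts_tail {e : Fin G.m} (he : e ∈ S) : G.tail e ∈ G.verts S :=
  Finset.mem_union_left _ (Finset.mem_image_of_mem _ he)

lemma mem_verts_head {e : Fin G.m} (he : e ∈ S) : G.head e ∈ G.verts S :=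
  Finset.mem_union_right _ (Finset.mem_image_of_mem _ he)

lemma mem_verts_iff {v : Fin G.n} :
    v ∈ G.verts S ↔ ∃ e ∈ S, G.tail e = v ∨ G.head e = v := by
  simp only [verts, Finset.mem_union, Finset.mem_image]
  constructor
  · rintro (⟨e, he, rfl⟩ | ⟨e, he, rfl⟩)
    · exact ⟨e, he, Or.inl rfl⟩
    · exact ⟨e, he, Or.inr rfl⟩
  · rintro ⟨e, he, (rfl | rfl)⟩
    · exact Or.inl ⟨e, he, rfl⟩
    · exact Or.inr ⟨e, he, rfl⟩

variable {G S}

lemma liftStep_mono {S' : Finset (Fin G.m)} (hSS : S ⊆ S') {x y : Fin G.n × Γ}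
    (h : G.liftStep S x y) : G.liftStep S' x y := by
  obtain ⟨e, he, h⟩ := h; exact ⟨e, hSS he, h⟩

lemma liftStep_symm {x y : Fin G.n × Γ} (h : G.liftStep S x y) : G.liftStep S y x := by
  obtain ⟨e, he, (⟨h1, h2, h3⟩ | ⟨h1, h2, h3⟩)⟩ := h
  · exact ⟨e, he, Or.inr ⟨h2, h1, by rw [h3]; abel⟩⟩
  · exact ⟨e, he, Or.inl ⟨h2, h1, by rw [h3]; abel⟩⟩

lemma liftStep_shift (t : Γ) {x y : Fin G.n × Γ} (h : G.liftStep S x y) :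
    G.liftStep S (x.1, x.2 + t) (y.1, y.2 + t) := by
  obtain ⟨e, he, (⟨h1, h2, h3⟩ | ⟨h1, h2, h3⟩)⟩ := h
  · exact ⟨e, he, Or.inl ⟨h1, h2, by simp [h3]; abel⟩⟩
  · exact ⟨e, he, Or.inr ⟨h1, h2, by simp [h3]; abel⟩⟩

lemma walk_shift (t : Γ) {x y : Fin G.n × Γ} (h : ReflTransGen (G.liftStep S) x y) :
    ReflTransGen (G.liftStep S) (x.1, x.2 + t) (y.1, y.2 + t) := by
  induction h with
  | refl => exact ReflTransGen.refl
  | tail h1 h2 ih => exact ih.tail (liftStep_shift t h2)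

lemma walk_symm {x y : Fin G.n × Γ} (h : ReflTransGen (G.liftStep S) x y) :
    ReflTransGen (G.liftStep S) y x := by
  induction h with
  | refl => exact ReflTransGen.refl
  | tail h1 h2 ih => exact ReflTransGen.head (liftStep_symm h2) ih

variable (G S) in
/-- There is a walk from `u` to `v` in the subgraph `S`. -/
def Reach (u v : Fin G.n) : Prop :=
  ∃ t : Γ, ReflTransGen (G.liftStep S) (u, 0) (v, t)

lemma Reach.refl (u : Fin G.n) : G.Reach S u u := ⟨0, ReflTransGen.refl⟩

lemma Reach.symm {u v : Fin G.n} (h : G.Reach S u v) : G.Reach S v u := by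
  obtain ⟨t, h⟩ := h
  refine ⟨-t, ?_⟩
  have := walk_shift (-t) (walk_symm h)
  simpa using this

lemma Reach.trans {u v w : Fin G.n} (h : G.Reach S u v) (h' : G.Reach S v w) :
    G.Reach S u w := by
  obtain ⟨t, h⟩ := h
  obtain ⟨s, h'⟩ := h'
  refine ⟨s + t, h.trans ?_⟩
  have := walk_shift t h'
  simpa using this

lemma Reach.of_adj {x y : {v : Fin G.n // v ∈ G.verts S}} (h : G.adj S x y) :
    G.Reach S x.1 y.1 := by
  obtain ⟨e, he, (⟨h1, h2⟩ | ⟨h1, h2⟩)⟩ := h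
  · exact ⟨G.color e, ReflTransGen.single ⟨e, he, Or.inl ⟨h1, h2, by simp⟩⟩⟩
  · exact ⟨-G.color e, ReflTransGen.single ⟨e, he, Or.inr ⟨h2, h1, by abel⟩⟩⟩

lemma Reach.of_quot_eq {x y : {v : Fin G.n // v ∈ G.verts S}}
    (h : Quot.mk (G.adj S) x = Quot.mk (G.adj S) y) : G.Reach S x.1 y.1 := by
  have hE := Quot.eqvGen_exact h
  clear h
  induction hE with
  | rel a b hab => exact Reach.of_adj hab
  | refl a => exact Reach.refl _
  | symm a b _ ih => exact ih.symm
  | trans a b c _ _ ih1 ih2 => exact ih1.trans ih2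

lemma gainGroup_le_of_reach {u v : Fin G.n} (h : G.Reach S u v) :
    G.gainGroup S v ≤ G.gainGroup S u := by
  obtain ⟨t, hw⟩ := h
  rw [gainGroup]
  refine (AddSubgroup.closure_le _).2 ?_
  intro g hg
  simp only [Set.mem_setOf_eq] at hg
  have w2 : ReflTransGen (G.liftStep S) (v, t) (v, g + t) := by
    simpa using walk_shift t hg
  have w3 : ReflTransGen (G.liftStep S) (v, g + t) (u, g) := by
    have := walk_shift g (walk_symm hw)
    simpa [add_comm] using this
  exact AddSubgroup.subset_closure ((hw.trans w2).trans w3)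

lemma gainGroup_eq_of_reach {u v : Fin G.n} (h : G.Reach S u v) :
    G.gainGroup S u = G.gainGroup S v :=
  le_antisymm (gainGroup_le_of_reach h.symm) (gainGroup_le_of_reach h)

/-- A walk in `S` produces a `Quot.mk`-chain of adjacencies. -/
lemma quot_eq_of_walk {v : Fin G.n} (hv : v ∈ G.verts S) {p : Fin G.n × Γ}
    (h : ReflTransGen (G.liftStep S) (v, 0) p) (hp : p.1 ∈ G.verts S) :
    Quot.mk (G.adj S) (⟨v, hv⟩ : {x // x ∈ G.verts S}) = Quot.mk (G.adj S) ⟨p.1, hp⟩ := by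
  revert hp
  induction h with
  | refl => intro hp; rfl
  | @tail b c h1 h2 ih =>
    intro hp
    obtain ⟨e, he, hcase⟩ := h2
    have hb : b.1 ∈ G.verts S := by
      rcases hcase with ⟨h1', h2', _⟩ | ⟨h1', h2', _⟩
      · rw [← h1']; exact G.mem_verts_tail S he
      · rw [← h1']; exact G.mem_verts_head S he
    have hadj : G.adj S ⟨b.1, hb⟩ ⟨c.1, hp⟩ := by
      rcases hcase with ⟨h1', h2', _⟩ | ⟨h1', h2', _⟩
      · exact ⟨e, he, Or.inl ⟨h1', h2'⟩⟩
      · exact ⟨e, he, Or.inr ⟨h2', h1'⟩⟩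
    exact (ih hb).trans (Quot.sound hadj)

lemma quot_eq_of_reach {u v : Fin G.n} (h : G.Reach S u v) (hu : u ∈ G.verts S)
    (hv : v ∈ G.verts S) :
    Quot.mk (G.adj S) (⟨u, hu⟩ : {x // x ∈ G.verts S}) = Quot.mk (G.adj S) ⟨v, hv⟩ := by
  obtain ⟨t, hw⟩ := h
  exact quot_eq_of_walk hu hw hv

/-- Walks from `v` stay inside the set of edges reachable from `v`. -/
lemma walk_filter {v : Fin G.n} (P : Fin G.m → Prop) [DecidablePred P]
    (hP : ∀ e ∈ S, G.Reach S v (G.tail e) → P e) {p : Fin G.n × Γ}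
    (h : ReflTransGen (G.liftStep S) (v, 0) p) :
    ReflTransGen (G.liftStep (S.filter P)) (v, 0) p ∧ G.Reach S v p.1 := by
  induction h with
  | refl => exact ⟨ReflTransGen.refl, Reach.refl v⟩
  | @tail b c h1 h2 ih =>
    obtain ⟨ihw, ihr⟩ := ih
    have hrc : G.Reach S v c.1 := by
      obtain ⟨t, w⟩ := ihr
      refine ⟨c.2 + (t - b.2), w.tail ?_⟩
      have := liftStep_shift (t - b.2) h2
      simpa using this
    obtain ⟨e, he, hcase⟩ := h2
    have hPe : P e := by
      apply hP e he
      rcases hcase with ⟨h1', h2', h3'⟩ | ⟨h1', h2', h3'⟩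
      · rw [h1']; exact ihr
      · rw [h2']; exact hrc
    exact ⟨ihw.tail ⟨e, Finset.mem_filter.2 ⟨he, hPe⟩, hcase⟩, hrc⟩

lemma gainGroup_filter {v : Fin G.n} (P : Fin G.m → Prop) [DecidablePred P]
    (hP : ∀ e ∈ S, G.Reach S v (G.tail e) → P e) :
    G.gainGroup (S.filter P) v = G.gainGroup S v := by
  apply le_antisymm
  · apply AddSubgroup.closure_mono
    intro g hg
    exact ReflTransGen.mono (fun a b h => liftStep_mono (Finset.filter_subset P S) h) _ _ hg
  · apply AddSubgroup.closure_mono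
    intro g hg
    exact (walk_filter P hP hg).1

variable (G S)

/-- Edge `e` belongs to the component `x` (when `e ∈ S`). -/
abbrev inComp (x : G.comps S) (e : Fin G.m) : Prop :=
  ∃ h : G.tail e ∈ G.verts S, Quot.mk (G.adj S) ⟨G.tail e, h⟩ = x

/-- Vertex `v` belongs to the component `x` (when `v ∈ G.verts S`). -/
abbrev inCompV (x : G.comps S) (v : Fin G.n) : Prop :=
  ∃ h : v ∈ G.verts S, Quot.mk (G.adj S) ⟨v, h⟩ = x

open Classical in
/-- The edges of the component `x`. -/
def compEdges (x : G.comps S) : Finset (Fin G.m) :=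
  S.filter (G.inComp S x)

/-- Vertex `v` lies in a component with trivial ρ-image. -/
abbrev TrivVert (v : Fin G.n) : Prop :=
  ∃ h : v ∈ G.verts S, G.TrivComp S (Quot.mk (G.adj S) ⟨v, h⟩)

open Classical in
/-- The edges lying in components with nontrivial ρ-image. -/
def ntEdges : Finset (Fin G.m) :=
  S.filter fun e => ¬ G.TrivVert S (G.tail e)

variable {G S}

lemma quot_tail_head {e : Fin G.m} (he : e ∈ S) :
    Quot.mk (G.adj S) (⟨G.tail e, G.mem_verts_tail S he⟩ : {x // x ∈ G.verts S})
      = Quot.mk (G.adj S) ⟨G.head e, G.mem_verts_head S he⟩ :=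
  Quot.sound ⟨e, he, Or.inl ⟨rfl, rfl⟩⟩

lemma trivComp_iff {v : Fin G.n} (h : v ∈ G.verts S) :
    G.TrivComp S (Quot.mk (G.adj S) ⟨v, h⟩) ↔ G.gainGroup S v = ⊥ := by
  constructor
  · rintro ⟨w, hw, hbot⟩
    have hr : G.Reach S w.1 v := Reach.of_quot_eq hw
    rw [← gainGroup_eq_of_reach hr, hbot]
  · intro hbot
    exact ⟨⟨v, h⟩, rfl, hbot⟩

lemma trivVert_iff {v : Fin G.n} (h : v ∈ G.verts S) :
    G.TrivVert S v ↔ G.gainGroup S v = ⊥ := by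
  constructor
  · rintro ⟨h', ht⟩
    exact (trivComp_iff h').1 ht
  · intro hbot
    exact ⟨h, (trivComp_iff h).2 hbot⟩

open Classical in
lemma verts_compEdges (x : G.comps S) :
    G.verts (G.compEdges S x) = (G.verts S).filter (G.inCompV S x) := by
  classical
  ext v
  simp only [Finset.mem_filter, mem_verts_iff, compEdges]
  constructor
  · rintro ⟨e, he, hv⟩
    obtain ⟨heS, ht, hq⟩ := he
    rcases hv with rfl | rfl
    · exact ⟨⟨e, heS, Or.inl rfl⟩, ht, hq⟩
    · refine ⟨⟨e, heS, Or.inr rfl⟩, G.mem_verts_head S heS, ?_⟩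
      rw [← quot_tail_head heS]
      exact hq
  · rintro ⟨hv, hmem, hq⟩
    obtain ⟨e, heS, hor⟩ := (mem_verts_iff G S).1 hmem
    refine ⟨e, ⟨heS, G.mem_verts_tail S heS, ?_⟩, hor⟩
    rcases hor with ht | hh
    · convert hq using 2
      simp [ht]
    · rw [quot_tail_head heS]
      convert hq using 2
      simp [hh]

open Classical in
lemma verts_ntEdges :
    G.verts (G.ntEdges S) = (G.verts S).filter (fun v => ¬ G.TrivVert S v) := by
  classical
  ext v
  simp only [Finset.mem_filter, mem_verts_iff, ntEdges]
  constructor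
  · rintro ⟨e, he, hv⟩
    obtain ⟨heS, hnt⟩ := he
    have hteq : G.gainGroup S (G.tail e) = G.gainGroup S (G.head e) :=
      gainGroup_eq_of_reach (Reach.of_quot_eq (quot_tail_head heS))
    rcases hv with rfl | rfl
    · exact ⟨⟨e, heS, Or.inl rfl⟩, hnt⟩
    · refine ⟨⟨e, heS, Or.inr rfl⟩, ?_⟩
      rw [trivVert_iff (G.mem_verts_head S heS), ← hteq]
      rw [trivVert_iff (G.mem_verts_tail S heS)] at hnt
      exact hnt
  · rintro ⟨hv, hnt⟩
    obtain ⟨e, heS, hor⟩ := hv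
    have hvS : v ∈ G.verts S := (mem_verts_iff G S).2 ⟨e, heS, hor⟩
    refine ⟨e, ⟨heS, ?_⟩, hor⟩
    rw [trivVert_iff (G.mem_verts_tail S heS)]
    rw [trivVert_iff hvS] at hnt
    rcases hor with ht | hh
    · rw [ht]; exact hnt
    · have hteq : G.gainGroup S (G.tail e) = G.gainGroup S (G.head e) :=
        gainGroup_eq_of_reach (Reach.of_quot_eq (quot_tail_head heS))
      rw [hteq, hh]; exact hnt

lemma gainGroup_compEdges {x : G.comps S} {v : Fin G.n} (h : v ∈ G.verts S)
    (hx : Quot.mk (G.adj S) ⟨v, h⟩ = x) :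
    G.gainGroup (G.compEdges S x) v = G.gainGroup S v := by
  classical
  apply gainGroup_filter
  intro e he hr
  have ht : G.tail e ∈ G.verts S := G.mem_verts_tail S he
  refine ⟨ht, ?_⟩
  rw [← quot_eq_of_reach hr h ht]
  exact hx

lemma gainGroup_ntEdges {v : Fin G.n} (h : v ∈ G.verts S) (hnt : ¬ G.TrivVert S v) :
    G.gainGroup (G.ntEdges S) v = G.gainGroup S v := by
  classical
  apply gainGroup_filter
  intro e he hr
  have ht : G.tail e ∈ G.verts S := G.mem_verts_tail S he
  rw [trivVert_iff ht, ← gainGroup_eq_of_reach hr]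
  rw [trivVert_iff h] at hnt
  exact hnt

lemma compEdges_nonempty (x : G.comps S) : (G.compEdges S x).Nonempty := by
  classical
  obtain ⟨w, rfl⟩ := Quot.exists_rep x
  obtain ⟨e, heS, hor⟩ := (mem_verts_iff G S).1 w.2
  refine ⟨e, Finset.mem_filter.2 ⟨heS, G.mem_verts_tail S heS, ?_⟩⟩
  rcases hor with ht | hh
  · exact congrArg _ (Subtype.ext ht)
  · exact (quot_tail_head heS).trans (congrArg _ (Subtype.ext hh))

lemma mem_verts_compEdges {x : G.comps S} {v : Fin G.n} :
    v ∈ G.verts (G.compEdges S x) ↔ v ∈ G.verts S ∧ G.inCompV S x v := by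
  classical
  rw [verts_compEdges, Finset.mem_filter]

lemma mem_verts_ntEdges {v : Fin G.n} :
    v ∈ G.verts (G.ntEdges S) ↔ v ∈ G.verts S ∧ ¬ G.TrivVert S v := by
  classical
  rw [verts_ntEdges, Finset.mem_filter]

open Classical in
lemma reach_compEdges {x : G.comps S} {u w : Fin G.n} (hu : u ∈ G.verts S)
    (hqu : Quot.mk (G.adj S) ⟨u, hu⟩ = x) (h : G.Reach S u w) :
    G.Reach (G.compEdges S x) u w := by
  obtain ⟨t, hw⟩ := h
  refine ⟨t, (walk_filter (G.inComp S x) ?_ hw).1⟩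
  intro e he hr
  have ht : G.tail e ∈ G.verts S := G.mem_verts_tail S he
  exact ⟨ht, (quot_eq_of_reach hr hu ht).symm.trans hqu⟩

open Classical in
lemma reach_ntEdges {u w : Fin G.n} (hu : u ∈ G.verts S) (hnt : ¬ G.TrivVert S u)
    (h : G.Reach S u w) : G.Reach (G.ntEdges S) u w := by
  obtain ⟨t, hw⟩ := h
  refine ⟨t, (walk_filter _ ?_ hw).1⟩
  intro e he hr
  have ht : G.tail e ∈ G.verts S := G.mem_verts_tail S he
  rw [trivVert_iff ht, ← gainGroup_eq_of_reach hr]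
  rw [trivVert_iff hu] at hnt
  exact hnt

lemma numComps_compEdges (x : G.comps S) : G.numComps (G.compEdges S x) = 1 := by
  classical
  obtain ⟨e, he⟩ := compEdges_nonempty (S := S) x
  have hne : Nonempty (G.comps (G.compEdges S x)) :=
    ⟨Quot.mk _ ⟨G.tail e, G.mem_verts_tail _ he⟩⟩
  have hsub : Subsingleton (G.comps (G.compEdges S x)) := by
    constructor
    intro a b
    induction a using Quot.ind with | _ u => ?_
    induction b using Quot.ind with | _ w => ?_
    obtain ⟨huS, hu', hqu⟩ := mem_verts_compEdges.1 u.2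
    obtain ⟨hwS, hw', hqw⟩ := mem_verts_compEdges.1 w.2
    have hr : G.Reach S u.1 w.1 := Reach.of_quot_eq (hqu.trans hqw.symm)
    have hrE : G.Reach (G.compEdges S x) u.1 w.1 := reach_compEdges hu' hqu hr
    exact quot_eq_of_reach hrE u.2 w.2
  exact Nat.card_unique

lemma not_trivComp_of_mem_verts_ntEdges {v : Fin G.n} (hv : v ∈ G.verts (G.ntEdges S))
    (h : v ∈ G.verts S) : ¬ G.TrivComp S (Quot.mk (G.adj S) ⟨v, h⟩) := by
  obtain ⟨-, hnt⟩ := mem_verts_ntEdges.1 hv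
  intro htc
  exact hnt ⟨h, htc⟩

lemma verts_ntEdges_subset : G.verts (G.ntEdges S) ⊆ G.verts S :=
  fun _ hv => (mem_verts_ntEdges.1 hv).1

variable (G S) in
/-- The underlying map of `ntMap`. -/
def ntMapAux (u : {v : Fin G.n // v ∈ G.verts (G.ntEdges S)}) :
    {x : G.comps S // ¬ G.TrivComp S x} :=
  ⟨Quot.mk (G.adj S) ⟨u.1, verts_ntEdges_subset u.2⟩,
    not_trivComp_of_mem_verts_ntEdges u.2 _⟩

open Classical in
lemma ntEdges_subset : G.ntEdges S ⊆ S := Finset.filter_subset _ _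

lemma ntMapAux_resp (a b : {v : Fin G.n // v ∈ G.verts (G.ntEdges S)})
    (hab : G.adj (G.ntEdges S) a b) : ntMapAux G S a = ntMapAux G S b := by
  obtain ⟨e, heN, hcase⟩ := hab
  have heS : e ∈ S := ntEdges_subset heN
  apply Subtype.ext
  apply Quot.sound
  rcases hcase with ⟨h1, h2⟩ | ⟨h1, h2⟩
  · exact ⟨e, heS, Or.inl ⟨h1, h2⟩⟩
  · exact ⟨e, heS, Or.inr ⟨h1, h2⟩⟩

variable (G S) in
/-- The canonical identification of components of the nontrivial part with
nontrivial components. -/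
def ntMap : G.comps (G.ntEdges S) → {x : G.comps S // ¬ G.TrivComp S x} :=
  Quot.lift (ntMapAux G S) ntMapAux_resp

lemma ntMap_mk (u : {v : Fin G.n // v ∈ G.verts (G.ntEdges S)}) :
    ntMap G S (Quot.mk _ u) = ntMapAux G S u := rfl

lemma ntMap_bijective : Function.Bijective (ntMap G S) := by
  classical
  constructor
  · intro a b
    induction a using Quot.ind with | _ u => ?_
    induction b using Quot.ind with | _ w => ?_
    intro hfe
    rw [ntMap_mk, ntMap_mk] at hfe
    have hq : Quot.mk (G.adj S) ⟨u.1, verts_ntEdges_subset u.2⟩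
        = Quot.mk (G.adj S) ⟨w.1, verts_ntEdges_subset w.2⟩ :=
      congrArg Subtype.val hfe
    have hr : G.Reach S u.1 w.1 := Reach.of_quot_eq hq
    have hntu : ¬ G.TrivVert S u.1 := (mem_verts_ntEdges.1 u.2).2
    have hrN : G.Reach (G.ntEdges S) u.1 w.1 :=
      reach_ntEdges (verts_ntEdges_subset u.2) hntu hr
    exact quot_eq_of_reach hrN u.2 w.2
  · rintro ⟨x, hx⟩
    obtain ⟨w, rfl⟩ := Quot.exists_rep x
    obtain ⟨e, heS, hor⟩ := (mem_verts_iff G S).1 w.2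
    have hntw : ¬ G.TrivVert S w.1 := by
      rintro ⟨h', htc⟩
      exact hx htc
    have hnte : ¬ G.TrivVert S (G.tail e) := by
      have hth : G.gainGroup S (G.tail e) = G.gainGroup S (G.head e) :=
        gainGroup_eq_of_reach (Reach.of_quot_eq (quot_tail_head heS))
      rw [trivVert_iff (G.mem_verts_tail S heS)]
      rw [trivVert_iff w.2] at hntw
      rcases hor with ht | hh
      · rw [ht]; exact hntw
      · rw [hth, hh]; exact hntw
    have heN : e ∈ G.ntEdges S := by
      classical
      exact Finset.mem_filter.2 ⟨heS, hnte⟩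
    have hwN : w.1 ∈ G.verts (G.ntEdges S) := (mem_verts_iff G _).2 ⟨e, heN, hor⟩
    refine ⟨Quot.mk _ ⟨w.1, hwN⟩, ?_⟩
    rw [ntMap_mk]
    exact Subtype.ext rfl

lemma numComps_ntEdges : G.numComps (G.ntEdges S) = G.c1 S := by
  rw [numComps, c1, Nat.card_eq_of_bijective _ (ntMap_bijective (G := G) (S := S))]

lemma verts_mono {E : Finset (Fin G.m)} (h : E ⊆ S) : G.verts E ⊆ G.verts S := by
  intro v hv
  obtain ⟨e, he, hor⟩ := (mem_verts_iff G E).1 hv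
  exact (mem_verts_iff G S).2 ⟨e, h he, hor⟩

lemma gainGroup_mono {E : Finset (Fin G.m)} (h : E ⊆ S) (v : Fin G.n) :
    G.gainGroup E v ≤ G.gainGroup S v :=
  AddSubgroup.closure_mono fun _ hg => ReflTransGen.mono (fun _ _ hh => liftStep_mono h hh) _ _ hg

lemma gainGroup_le_Lambda {v : Fin G.n} (hv : v ∈ G.verts S) :
    G.gainGroup S v ≤ G.Lambda S := by
  rw [Lambda]
  exact le_iSup₂ (f := fun v (_ : v ∈ G.verts S) => G.gainGroup S v) v hv

lemma Lambda_mono {E : Finset (Fin G.m)} (h : E ⊆ S) : G.Lambda E ≤ G.Lambda S := by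
  rw [Lambda]
  exact iSup₂_le fun v hv =>
    (gainGroup_mono h v).trans (gainGroup_le_Lambda (verts_mono h hv))

lemma Lambda_compEdges_eq_bot {x : G.comps S} (hx : G.TrivComp S x) :
    G.Lambda (G.compEdges S x) = ⊥ := by
  classical
  rw [Lambda]
  simp only [iSup_eq_bot]
  intro v hv
  obtain ⟨hvS, hv', hq⟩ := mem_verts_compEdges.1 hv
  rw [gainGroup_compEdges hv' hq]
  exact (trivComp_iff hv').1 (by rw [hq]; exact hx)

open Classical in
lemma mem_ntEdges {e : Fin G.m} :
    e ∈ G.ntEdges S ↔ e ∈ S ∧ ¬ G.TrivVert S (G.tail e) := Finset.mem_filter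

lemma mem_ntEdges_iff {e : Fin G.m} :
    e ∈ G.ntEdges S ↔ e ∈ S ∧
      ∃ h : G.tail e ∈ G.verts S, ¬ G.TrivComp S (Quot.mk (G.adj S) ⟨G.tail e, h⟩) := by
  rw [mem_ntEdges]
  refine and_congr_right fun heS => ?_
  have h := G.mem_verts_tail S heS
  constructor
  · intro hnt
    exact ⟨h, fun htc => hnt ⟨h, htc⟩⟩
  · rintro ⟨h', hnt⟩ ⟨h'', htc⟩
    exact hnt htc

lemma mem_verts_ntEdges_iff {v : Fin G.n} :
    v ∈ G.verts (G.ntEdges S) ↔ v ∈ G.verts S ∧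
      ∃ h : v ∈ G.verts S, ¬ G.TrivComp S (Quot.mk (G.adj S) ⟨v, h⟩) := by
  rw [mem_verts_ntEdges]
  refine and_congr_right fun hv => ?_
  constructor
  · intro hnt
    exact ⟨hv, fun htc => hnt ⟨hv, htc⟩⟩
  · rintro ⟨h', hnt⟩ ⟨h'', htc⟩
    exact hnt htc

lemma c0_eq [Fintype (G.comps S)] [DecidablePred (G.TrivComp S)] :
    G.c0 S = (Finset.univ.filter (G.TrivComp S)).card := by
  classical
  rw [c0, Nat.card_eq_fintype_card, Fintype.card_subtype]

lemma c0_add_c1 : G.c0 S + G.c1 S = G.numComps S := by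
  classical
  haveI := Fintype.ofFinite (G.comps S)
  rw [c0, c1, numComps, Nat.card_eq_fintype_card, Nat.card_eq_fintype_card,
    Nat.card_eq_fintype_card, Fintype.card_subtype, Fintype.card_subtype, ← Finset.card_univ]
  exact Finset.card_filter_add_card_filter_not _

lemma one_le_numComps (hS : S.Nonempty) : 1 ≤ G.numComps S := by
  obtain ⟨e, he⟩ := hS
  haveI : Nonempty (G.comps S) := ⟨Quot.mk _ ⟨G.tail e, G.mem_verts_tail S he⟩⟩
  exact Nat.card_pos

lemma numComps_empty : G.numComps (∅ : Finset (Fin G.m)) = 0 := by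
  have hie : IsEmpty {v : Fin G.n // v ∈ G.verts (∅ : Finset (Fin G.m))} := by
    constructor
    rintro ⟨v, hv⟩
    simp [verts] at hv
  haveI : IsEmpty (G.comps (∅ : Finset (Fin G.m))) :=
    ⟨fun a => by
      induction a using Quot.ind with | _ u => exact hie.false u⟩
  exact Nat.card_of_isEmpty

open Classical in
lemma card_eq_sum_aux [Fintype (G.comps S)] (Q : G.comps S → Prop) (E : Finset (Fin G.m))
    (hE : ∀ e, e ∈ E ↔ e ∈ S ∧
      ∃ h : G.tail e ∈ G.verts S, Q (Quot.mk (G.adj S) ⟨G.tail e, h⟩))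
    (F : Finset (G.comps S)) (hF : ∀ x, x ∈ F ↔ Q x) :
    E.card = ∑ x ∈ F, (G.compEdges S x).card := by
  rcases S.eq_empty_or_nonempty with rfl | hS
  · have hE0 : E = ∅ :=
      Finset.eq_empty_of_forall_notMem fun e he => by simpa using ((hE e).1 he).1
    simp [hE0, compEdges]
  · obtain ⟨e0, he0⟩ := hS
    haveI : Nonempty (G.comps S) := ⟨Quot.mk _ ⟨G.tail e0, G.mem_verts_tail S he0⟩⟩
    set f : Fin G.m → G.comps S := fun e =>
      if h : G.tail e ∈ G.verts S then Quot.mk (G.adj S) ⟨G.tail e, h⟩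
      else Classical.arbitrary _ with hf
    have hmem : ∀ e ∈ E, f e ∈ F := by
      intro e he
      obtain ⟨heS, h, hQ⟩ := (hE e).1 he
      refine (hF _).2 ?_
      rw [hf]
      simp only
      refine (congrArg Q (dif_pos h)).mpr ?_
      exact hQ
    rw [Finset.card_eq_sum_card_fiberwise hmem]
    apply Finset.sum_congr rfl
    intro x hx
    congr 1
    ext e
    simp only [Finset.mem_filter, compEdges, hE e]
    constructor
    · rintro ⟨⟨heS, hP⟩, hfx⟩
      refine ⟨heS, G.mem_verts_tail S heS, ?_⟩
      rw [hf] at hfx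
      simp only at hfx
      replace hfx := (dif_pos (G.mem_verts_tail S heS)).symm.trans hfx
      exact hfx
    · rintro ⟨heS, h, hq⟩
      have hQ : Q x := (hF x).1 hx
      refine ⟨⟨heS, h, by rw [hq]; exact hQ⟩, ?_⟩
      rw [hf]
      simp only
      refine (dif_pos h).trans ?_
      exact hq

open Classical in
lemma verts_card_eq_sum_aux [Fintype (G.comps S)] (Q : G.comps S → Prop)
    (V : Finset (Fin G.n))
    (hV : ∀ v, v ∈ V ↔ v ∈ G.verts S ∧
      ∃ h : v ∈ G.verts S, Q (Quot.mk (G.adj S) ⟨v, h⟩))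
    (F : Finset (G.comps S)) (hF : ∀ x, x ∈ F ↔ Q x) :
    V.card = ∑ x ∈ F, (G.verts (G.compEdges S x)).card := by
  rcases (G.verts S).eq_empty_or_nonempty with hv | hv
  · have hall : ∀ x : G.comps S, G.verts (G.compEdges S x) = ∅ := by
      intro x
      apply Finset.eq_empty_of_forall_notMem
      intro w hwm
      have hw1 : w ∈ G.verts S := (mem_verts_compEdges.1 hwm).1
      rw [hv] at hw1
      exact Finset.notMem_empty w hw1
    have hV0 : V = ∅ := by
      apply Finset.eq_empty_of_forall_notMem
      intro w hw
      have hw1 : w ∈ G.verts S := ((hV w).1 hw).1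
      rw [hv] at hw1
      exact Finset.notMem_empty w hw1
    simp [hV0, hall]
  · obtain ⟨v0, hv0⟩ := hv
    haveI : Nonempty (G.comps S) := ⟨Quot.mk _ ⟨v0, hv0⟩⟩
    set g : Fin G.n → G.comps S := fun v =>
      if h : v ∈ G.verts S then Quot.mk (G.adj S) ⟨v, h⟩
      else Classical.arbitrary _ with hg
    have hmem : ∀ v ∈ V, g v ∈ F := by
      intro v hvm
      obtain ⟨hvS, h, hQ⟩ := (hV v).1 hvm
      refine (hF _).2 ?_
      rw [hg]
      simp only
      refine (congrArg Q (dif_pos h)).mpr ?_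
      exact hQ
    rw [Finset.card_eq_sum_card_fiberwise hmem]
    apply Finset.sum_congr rfl
    intro x hx
    congr 1
    rw [verts_compEdges]
    ext v
    simp only [Finset.mem_filter, hV v]
    constructor
    · rintro ⟨⟨hvS, hP⟩, hgx⟩
      refine ⟨hvS, hvS, ?_⟩
      rw [hg] at hgx
      simp only at hgx
      replace hgx := (dif_pos hvS).symm.trans hgx
      exact hgx
    · rintro ⟨hvS, h, hq⟩
      have hQ : Q x := (hF x).1 hx
      refine ⟨⟨hvS, h, by rw [hq]; exact hQ⟩, ?_⟩
      rw [hg]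
      simp only
      refine (dif_pos h).trans ?_
      exact hq

end CGraph

/-- The rank of a subgroup of `ℤ²`. -/
def zrank (H : AddSubgroup (ℤ × ℤ)) : ℕ :=
  Module.finrank ℤ (AddSubgroup.toIntSubmodule H)

lemma zrank_eq_zero_iff {H : AddSubgroup (ℤ × ℤ)} : zrank H = 0 ↔ H = ⊥ := by
  rw [zrank, Submodule.finrank_eq_zero]
  constructor
  · intro h
    have hb : AddSubgroup.toIntSubmodule (⊥ : AddSubgroup (ℤ × ℤ)) = ⊥ := map_bot _
    exact AddSubgroup.toIntSubmodule.injective (h.trans hb.symm)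
  · rintro rfl
    exact map_bot _

lemma zrank_mono {H K : AddSubgroup (ℤ × ℤ)} (h : H ≤ K) : zrank H ≤ zrank K :=
  Submodule.finrank_mono (AddSubgroup.toIntSubmodule.monotone h)

lemma one_le_zrank_Lambda {G : CGraph (ℤ × ℤ)} {S : Finset (Fin G.m)} {v : Fin G.n}
    (hv : v ∈ G.verts S) (h : G.gainGroup S v ≠ ⊥) : 1 ≤ zrank (G.Lambda S) := by
  rcases Nat.eq_zero_or_pos (zrank (G.Lambda S)) with h0 | h1
  · exfalso
    have hb := zrank_eq_zero_iff.1 h0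
    have hle := CGraph.gainGroup_le_Lambda hv
    rw [hb, le_bot_iff] at hle
    exact h hle
  · exact h1

lemma c1_eq_zero_of_zrank {G : CGraph (ℤ × ℤ)} {S : Finset (Fin G.m)}
    (h : zrank (G.Lambda S) = 0) : G.c1 S = 0 := by
  have hbot := zrank_eq_zero_iff.1 h
  have hall : ∀ x : G.comps S, G.TrivComp S x := by
    intro x
    obtain ⟨w, rfl⟩ := Quot.exists_rep x
    refine ⟨w, rfl, ?_⟩
    have hle := CGraph.gainGroup_le_Lambda w.2
    rw [hbot, le_bot_iff] at hle
    exact hle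
  haveI : IsEmpty {x : G.comps S // ¬ G.TrivComp S x} := ⟨fun y => y.2 (hall y.1)⟩
  rw [CGraph.c1]
  exact Nat.card_of_isEmpty

/-- For a `ℤ²`-colored graph, the colored-Laman sparsity counts
`m' ≤ 2n' + max(2k'-1,0) - 3c'₀ - 2c'₁` hold for all subgraphs iff the alternative
counts `m' ≤ 2(n' + k') - 3 - 2(c' - 1)` hold for all subgraphs. -/
theorem coloredLaman_counts_equiv (G : CGraph (ℤ × ℤ)) :
    (∀ S : Finset (Fin G.m), S.Nonempty →
      (S.card : ℤ) ≤ 2 * (G.verts S).card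
        + max (2 * (zrank (G.Lambda S) : ℤ) - 1) 0
        - 3 * (G.c0 S : ℤ) - 2 * (G.c1 S : ℤ)) ↔
    (∀ S : Finset (Fin G.m), S.Nonempty →
      (S.card : ℤ) ≤ 2 * ((G.verts S).card + (zrank (G.Lambda S) : ℤ))
        - 3 - 2 * ((G.numComps S : ℤ) - 1)) := by
  constructor
  · intro hA S hS
    have h1 := hA S hS
    have h2 : G.c0 S + G.c1 S = G.numComps S := CGraph.c0_add_c1
    have h3 : 1 ≤ G.numComps S := CGraph.one_le_numComps hS
    have h2' : (G.c0 S : ℤ) + (G.c1 S : ℤ) = (G.numComps S : ℤ) := by exact_mod_cast h2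
    have h3' : (1 : ℤ) ≤ (G.numComps S : ℤ) := by exact_mod_cast h3
    have hc0nn : (0 : ℤ) ≤ (G.c0 S : ℤ) := Int.natCast_nonneg _
    have hc1nn : (0 : ℤ) ≤ (G.c1 S : ℤ) := Int.natCast_nonneg _
    rcases Nat.eq_zero_or_pos (zrank (G.Lambda S)) with hk | hk
    · have hc1 : G.c1 S = 0 := c1_eq_zero_of_zrank hk
      have hc1' : (G.c1 S : ℤ) = 0 := by exact_mod_cast hc1
      have hmax0 : max (2 * ((zrank (G.Lambda S)) : ℤ) - 1) 0 = 0 := by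
        rw [hk]
        push_cast
        exact max_eq_right (by norm_num)
      rw [hmax0] at h1
      have hkz : ((zrank (G.Lambda S)) : ℤ) = 0 := by exact_mod_cast hk
      rw [hkz]
      linarith
    · have hk' : (1 : ℤ) ≤ ((zrank (G.Lambda S)) : ℤ) := by exact_mod_cast hk
      have hmax : max (2 * ((zrank (G.Lambda S)) : ℤ) - 1) 0
          = 2 * ((zrank (G.Lambda S)) : ℤ) - 1 := max_eq_left (by linarith)
      rw [hmax] at h1
      linarith
  · intro hB S hS
    classical
    haveI := Fintype.ofFinite (G.comps S)
    have hmtot : S.card = ∑ x : G.comps S, (G.compEdges S x).card := by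
      apply CGraph.card_eq_sum_aux (fun _ => True)
      · intro e
        exact ⟨fun he => ⟨he, G.mem_verts_tail S he, trivial⟩, fun h => h.1⟩
      · intro x
        simp
    have hvtot : (G.verts S).card = ∑ x : G.comps S, (G.verts (G.compEdges S x)).card := by
      apply CGraph.verts_card_eq_sum_aux (fun _ => True)
      · intro v
        exact ⟨fun hv => ⟨hv, hv, trivial⟩, fun h => h.1⟩
      · intro x
        simp
    have hntm : (G.ntEdges S).card
        = ∑ x ∈ Finset.univ.filter (fun x => ¬ G.TrivComp S x), (G.compEdges S x).card := by
      apply CGraph.card_eq_sum_aux (fun x => ¬ G.TrivComp S x)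
      · intro e
        exact CGraph.mem_ntEdges_iff
      · intro x
        simp
    have hntv : (G.verts (G.ntEdges S)).card
        = ∑ x ∈ Finset.univ.filter (fun x => ¬ G.TrivComp S x),
            (G.verts (G.compEdges S x)).card := by
      apply CGraph.verts_card_eq_sum_aux (fun x => ¬ G.TrivComp S x)
      · intro v
        exact CGraph.mem_verts_ntEdges_iff
      · intro x
        simp
    have hmsplit : S.card = (∑ x ∈ Finset.univ.filter (G.TrivComp S), (G.compEdges S x).card)
        + (G.ntEdges S).card := by
      rw [hmtot, hntm]
      exact (Finset.sum_filter_add_sum_filter_not Finset.univ (G.TrivComp S) _).symm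
    have hvsplit : (G.verts S).card
        = (∑ x ∈ Finset.univ.filter (G.TrivComp S), (G.verts (G.compEdges S x)).card)
        + (G.verts (G.ntEdges S)).card := by
      rw [hvtot, hntv]
      exact (Finset.sum_filter_add_sum_filter_not Finset.univ (G.TrivComp S) _).symm
    have hm' : (S.card : ℤ)
        = (∑ x ∈ Finset.univ.filter (G.TrivComp S), ((G.compEdges S x).card : ℤ))
        + ((G.ntEdges S).card : ℤ) := by exact_mod_cast hmsplit
    have hv' : ((G.verts S).card : ℤ)
        = (∑ x ∈ Finset.univ.filter (G.TrivComp S), ((G.verts (G.compEdges S x)).card : ℤ))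
        + ((G.verts (G.ntEdges S)).card : ℤ) := by exact_mod_cast hvsplit
    have hc0 : G.c0 S = (Finset.univ.filter (G.TrivComp S)).card := CGraph.c0_eq
    have hc0' : (G.c0 S : ℤ) = ((Finset.univ.filter (G.TrivComp S)).card : ℤ) := by
      exact_mod_cast hc0
    have hper : ∀ x ∈ Finset.univ.filter (G.TrivComp S),
        ((G.compEdges S x).card : ℤ) ≤ 2 * ((G.verts (G.compEdges S x)).card : ℤ) - 3 := by
      intro x hx
      have htriv : G.TrivComp S x := (Finset.mem_filter.1 hx).2
      have hb := hB (G.compEdges S x) (CGraph.compEdges_nonempty x)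
      rw [CGraph.numComps_compEdges] at hb
      have hz : zrank (G.Lambda (G.compEdges S x)) = 0 :=
        zrank_eq_zero_iff.2 (CGraph.Lambda_compEdges_eq_bot htriv)
      rw [hz] at hb
      push_cast at hb
      linarith
    have hsum := Finset.sum_le_sum hper
    rw [Finset.sum_sub_distrib, ← Finset.mul_sum, Finset.sum_const, nsmul_eq_mul] at hsum
    rcases (G.ntEdges S).eq_empty_or_nonempty with hNe | hNe
    · have hc1 : G.c1 S = 0 := by
        rw [← CGraph.numComps_ntEdges (G := G) (S := S), hNe, CGraph.numComps_empty]
      have hc1' : (G.c1 S : ℤ) = 0 := by exact_mod_cast hc1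
      have hN0 : ((G.ntEdges S).card : ℤ) = 0 := by rw [hNe]; simp
      have hNv0 : ((G.verts (G.ntEdges S)).card : ℤ) = 0 := by
        rw [hNe]; simp [CGraph.verts]
      have hmax : (0 : ℤ) ≤ max (2 * ((zrank (G.Lambda S)) : ℤ) - 1) 0 := le_max_right _ _
      linarith
    · obtain ⟨e0, he0⟩ := hNe
      have he0' := (CGraph.mem_ntEdges (G := G) (S := S)).1 he0
      have he0S : e0 ∈ S := he0'.1
      have hnt : ¬ G.TrivVert S (G.tail e0) := he0'.2
      have htm : G.tail e0 ∈ G.verts S := G.mem_verts_tail S he0S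
      have hgne : G.gainGroup S (G.tail e0) ≠ ⊥ :=
        fun hb => hnt ((CGraph.trivVert_iff htm).2 hb)
      have hk1 : 1 ≤ zrank (G.Lambda S) := one_le_zrank_Lambda htm hgne
      have hk1' : (1 : ℤ) ≤ ((zrank (G.Lambda S)) : ℤ) := by exact_mod_cast hk1
      have hmax : max (2 * ((zrank (G.Lambda S)) : ℤ) - 1) 0
          = 2 * ((zrank (G.Lambda S)) : ℤ) - 1 := max_eq_left (by linarith)
      have hbN := hB (G.ntEdges S) ⟨e0, he0⟩
      rw [CGraph.numComps_ntEdges] at hbN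
      have hkN : ((zrank (G.Lambda (G.ntEdges S))) : ℤ) ≤ ((zrank (G.Lambda S)) : ℤ) := by
        exact_mod_cast zrank_mono (CGraph.Lambda_mono CGraph.ntEdges_subset)
      rw [hmax]
      linarith
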